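/- arXiv:2509.08798 — 3 statements merged into one kernel-verified Lean document; each statement's English description precedes it below -/
import Mathlib

section
/- Let G = (V, E) be a finite simple graph. Each of the following properties is reconfiguration monotone increasing: being a global defensive alliance, being a global offensive alliance, and being a global powerful alliance. That is, if A and B both have the respective property and B is obtained from A by one token jumping step with v the unique vertex of B ∖ A, then A ∪ {v} also has that property. -/
open Finset

variable {V : Type*}

section Defs

variable [Fintype V] [DecidableEq V] (G : SimpleGraph V) [DecidableRel G.Adj]

/-- `NbrsIn G A v` is the number of neighbors of `v` lying in `A` (denoted `d_A(v)`). -/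
def NbrsIn (A : Finset V) (v : V) : ℕ := (A.filter (fun u => G.Adj v u)).card

/-- The boundary `∂A = N(A) ∖ A`: vertices outside `A` with a neighbor in `A`. -/
def Bdry (A : Finset V) : Finset V :=
  Finset.univ.filter (fun v => v ∉ A ∧ ∃ u ∈ A, G.Adj v u)

/-- `A` is a defensive alliance: `d_A(v) + 1 ≥ d_{V∖A}(v)` for every `v ∈ A`. -/
def DefAll (A : Finset V) : Prop := ∀ v ∈ A, NbrsIn G A v + 1 ≥ NbrsIn G Aᶜ v

/-- `A` is an offensive alliance: `d_A(v) ≥ d_{V∖A}(v) + 1` for every `v ∈ ∂A`. -/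
def OffAll (A : Finset V) : Prop := ∀ v ∈ Bdry G A, NbrsIn G A v ≥ NbrsIn G Aᶜ v + 1

/-- `A` is a powerful alliance: both a defensive and an offensive alliance. -/
def PowAll (A : Finset V) : Prop := DefAll G A ∧ OffAll G A

/-- `A` is a dominating set: every vertex is in `A` or has a neighbor in `A`. -/
def DomSet (A : Finset V) : Prop := ∀ v : V, v ∈ A ∨ ∃ u ∈ A, G.Adj v u

/-- `A` is an independent set. -/
def IndSet (A : Finset V) : Prop := ∀ u ∈ A, ∀ w ∈ A, ¬ G.Adj u w

/-- The set of leaves (vertices of degree one) of `G`. -/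
def Leaves : Finset V := Finset.univ.filter (fun v => G.degree v = 1)

/-- `Z(X) = {v ∈ V ∖ N[X] : N(v) ⊆ L ∪ ∂X}`. -/
def ZSet (X : Finset V) : Finset V :=
  Finset.univ.filter (fun v => v ∉ X ∧ (∀ u ∈ X, ¬ G.Adj v u) ∧
    G.neighborFinset v ⊆ Leaves G ∪ Bdry G X)

/-- `Y(X) = N[X] ∪ Z(X) ∪ L`. -/
def YSet (X : Finset V) : Finset V := (X ∪ Bdry G X) ∪ ZSet G X ∪ Leaves G

/-- Global independent offensive alliance: offensive alliance that is dominating and independent. -/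
def GIOA (A : Finset V) : Prop := OffAll G A ∧ DomSet G A ∧ IndSet G A

end Defs

/-- The induced subgraph `G^{≤r}` on vertices of degree at most `r` (modelled as a
graph on all of `V` whose edges are the edges of `G` with both endpoints of degree `≤ r`). -/
def GLE [Fintype V] (G : SimpleGraph V) [DecidableRel G.Adj] (r : ℕ) : SimpleGraph V where
  Adj u w := G.Adj u w ∧ G.degree u ≤ r ∧ G.degree w ≤ r
  symm := ⟨fun u w h => ⟨h.1.symm, h.2.2, h.2.1⟩⟩
  loopless := ⟨fun u h => G.irrefl h.1⟩

section Steps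

variable [DecidableEq V]

/-- Token jumping step: `|A| = |B|` and `|A ∖ B| = 1`. -/
def TJStep (A B : Finset V) : Prop := A.card = B.card ∧ (A \ B).card = 1

/-- Token addition step: `A ⊆ B` and `|B ∖ A| = 1`. -/
def TAStep (A B : Finset V) : Prop := A ⊆ B ∧ (B \ A).card = 1

/-- Token removal step: `B ⊆ A` and `|A ∖ B| = 1`. -/
def TRStep (A B : Finset V) : Prop := B ⊆ A ∧ (A \ B).card = 1

/-- Token addition/removal (TAR) step. -/
def TARStep (A B : Finset V) : Prop := TAStep A B ∨ TRStep A B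

/-- `f 0, f 1, …, f (n-1)` is a reconfiguration sequence (with `n` members, i.e. of
length `n`) from `A` to `B` for step relation `step`, all of whose members satisfy `X`. -/
def SeqOn (step : Finset V → Finset V → Prop) (X : Finset V → Prop)
    (f : ℕ → Finset V) (A B : Finset V) (n : ℕ) : Prop :=
  1 ≤ n ∧ f 0 = A ∧ f (n - 1) = B ∧
    (∀ i, i + 1 < n → step (f i) (f (i + 1))) ∧ (∀ i, i < n → X (f i))

/-- There is an `X`-`step` reconfiguration sequence of length `n` from `A` to `B`. -/
def IsSeq (step : Finset V → Finset V → Prop) (X : Finset V → Prop)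
    (A B : Finset V) (n : ℕ) : Prop :=
  ∃ f : ℕ → Finset V, SeqOn step X f A B n

/-- `X` is reconfiguration monotone increasing (rmi). -/
def Rmi (X : Finset V → Prop) : Prop :=
  ∀ A B : Finset V, X A → X B → TJStep A B → ∀ v ∈ B \ A, X (insert v A)

/-- `X` is reconfiguration monotone decreasing (rmd). -/
def Rmd (X : Finset V → Prop) : Prop :=
  ∀ A B : Finset V, X A → X B → TJStep A B → ∀ v ∈ A \ B, X (A.erase v)

end Steps

lemma nbrsIn_mono {V : Type*} [Fintype V] [DecidableEq V]
    (G : SimpleGraph V) [DecidableRel G.Adj] {A B : Finset V} (h : A ⊆ B) (v : V) :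
    NbrsIn G A v ≤ NbrsIn G B v :=
  Finset.card_le_card (Finset.filter_subset_filter _ h)

lemma tj_subset {V : Type*} [DecidableEq V] {A B : Finset V} (hAB : TJStep A B)
    {v : V} (hv : v ∈ B \ A) : B ⊆ insert v A := by
  obtain ⟨hcard, hsd⟩ := hAB
  have hBA : (B \ A).card = 1 := by
    have h1 : (A \ B).card + (A ∩ B).card = A.card := by
      rw [Finset.card_sdiff_add_card_inter]
    have h2 : (B \ A).card + (B ∩ A).card = B.card := by
      rw [Finset.card_sdiff_add_card_inter]
    rw [Finset.inter_comm] at h2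
    omega
  obtain ⟨a, ha⟩ := Finset.card_eq_one.mp hBA
  intro w hw
  by_cases hwA : w ∈ A
  · exact Finset.mem_insert_of_mem hwA
  · have hw' : w ∈ B \ A := Finset.mem_sdiff.mpr ⟨hw, hwA⟩
    rw [ha, Finset.mem_singleton] at hw' hv
    rw [hw', ← hv]
    exact Finset.mem_insert_self _ _

lemma defAll_rmi {V : Type*} [Fintype V] [DecidableEq V]
    (G : SimpleGraph V) [DecidableRel G.Adj] {A B : Finset V}
    (hA : DefAll G A) (hB : DefAll G B) (hAB : TJStep A B) {v : V} (hv : v ∈ B \ A) :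
    DefAll G (insert v A) := by
  have hBsub : B ⊆ insert v A := tj_subset hAB hv
  have hAsub : A ⊆ insert v A := Finset.subset_insert _ _
  intro w hw
  rcases Finset.mem_insert.mp hw with hwv | hwA
  · subst hwv
    have h1 := hB w (Finset.mem_sdiff.mp hv).1
    have h2 := nbrsIn_mono G hBsub w
    have h3 := nbrsIn_mono G (Finset.compl_subset_compl.mpr hBsub) w
    unfold NbrsIn at *; omega
  · have h1 := hA w hwA
    have h2 := nbrsIn_mono G hAsub w
    have h3 := nbrsIn_mono G (Finset.compl_subset_compl.mpr hAsub) w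
    unfold NbrsIn at *; omega

lemma offAll_rmi {V : Type*} [Fintype V] [DecidableEq V]
    (G : SimpleGraph V) [DecidableRel G.Adj] {A B : Finset V}
    (hA : OffAll G A) (hB : OffAll G B) (hAB : TJStep A B) {v : V} (hv : v ∈ B \ A) :
    OffAll G (insert v A) := by
  have hBsub : B ⊆ insert v A := tj_subset hAB hv
  have hAsub : A ⊆ insert v A := Finset.subset_insert _ _
  intro w hw
  rw [Bdry, Finset.mem_filter] at hw
  obtain ⟨-, hwn, u, hu, hadj⟩ := hw
  rcases Finset.mem_insert.mp hu with huv | huA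
  · subst huv
    have hwB : w ∈ Bdry G B := by
      rw [Bdry, Finset.mem_filter]
      exact ⟨Finset.mem_univ _, fun h => hwn (hBsub h),
        ⟨u, (Finset.mem_sdiff.mp hv).1, hadj⟩⟩
    have h1 := hB w hwB
    have h2 := nbrsIn_mono G hBsub w
    have h3 := nbrsIn_mono G (Finset.compl_subset_compl.mpr hBsub) w
    unfold NbrsIn at *; omega
  · have hwA : w ∈ Bdry G A := by
      rw [Bdry, Finset.mem_filter]
      exact ⟨Finset.mem_univ _, fun h => hwn (hAsub h), ⟨u, huA, hadj⟩⟩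
    have h1 := hA w hwA
    have h2 := nbrsIn_mono G hAsub w
    have h3 := nbrsIn_mono G (Finset.compl_subset_compl.mpr hAsub) w
    unfold NbrsIn at *; omega

lemma domSet_mono {V : Type*} [Fintype V] [DecidableEq V]
    (G : SimpleGraph V) [DecidableRel G.Adj] {A B : Finset V}
    (h : A ⊆ B) (hA : DomSet G A) : DomSet G B := by
  intro w
  rcases hA w with hw | ⟨u, hu, hadj⟩
  · exact Or.inl (h hw)
  · exact Or.inr ⟨u, h hu, hadj⟩

theorem stmt_7 {V : Type*} [Fintype V] [DecidableEq V]
    (G : SimpleGraph V) [DecidableRel G.Adj] :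
    Rmi (fun A : Finset V => DefAll G A ∧ DomSet G A) ∧
      Rmi (fun A : Finset V => OffAll G A ∧ DomSet G A) ∧
      Rmi (fun A : Finset V => PowAll G A ∧ DomSet G A) := by
  refine ⟨?_, ?_, ?_⟩
  · intro A B hA hB hAB v hv
    exact ⟨defAll_rmi G hA.1 hB.1 hAB hv,
      domSet_mono G (Finset.subset_insert _ _) hA.2⟩
  · intro A B hA hB hAB v hv
    exact ⟨offAll_rmi G hA.1 hB.1 hAB hv,
      domSet_mono G (Finset.subset_insert _ _) hA.2⟩
  · intro A B hA hB hAB v hv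
    exact ⟨⟨defAll_rmi G hA.1.1 hB.1.1 hAB hv, offAll_rmi G hA.1.2 hB.1.2 hAB hv⟩,
      domSet_mono G (Finset.subset_insert _ _) hA.2⟩
end

section
/- Let G = (V, E) be a finite simple graph and let A_s, A_t ⊆ V be independent offensive alliances with |A_s| = |A_t| = k. Then there exists an independent-offensive-alliance TJ sequence from A_s to A_t if and only if there exists an independent-offensive-alliance TAR sequence from A_s to A_t with threshold k + 1. -/
open Finset

variable {V : Type*}

section Aux

variable {V : Type*} [DecidableEq V]

lemma tr_decomp {A B : Finset V} (h : TRStep A B) : ∃ u, u ∈ A ∧ B = A.erase u := by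
  obtain ⟨hsub, hcard⟩ := h
  obtain ⟨u, hu⟩ := Finset.card_eq_one.mp hcard
  have humem : u ∈ A \ B := hu ▸ Finset.mem_singleton_self u
  rw [Finset.mem_sdiff] at humem
  refine ⟨u, humem.1, ?_⟩
  ext x
  simp only [Finset.mem_erase]
  constructor
  · intro hx
    refine ⟨fun hxu => ?_, hsub hx⟩
    exact humem.2 (hxu ▸ hx)
  · rintro ⟨hne, hxA⟩
    by_contra hxB
    have : x ∈ A \ B := Finset.mem_sdiff.mpr ⟨hxA, hxB⟩
    rw [hu, Finset.mem_singleton] at this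
    exact hne this

lemma ta_decomp {A B : Finset V} (h : TAStep A B) : ∃ w, w ∉ A ∧ B = insert w A := by
  obtain ⟨u, hu, hB⟩ := tr_decomp (A := B) (B := A) ⟨h.1, h.2⟩
  refine ⟨u, by simp [hB], ?_⟩
  rw [hB, Finset.insert_erase hu]

lemma tr_intro {A : Finset V} {u : V} (hu : u ∈ A) : TRStep A (A.erase u) := by
  refine ⟨Finset.erase_subset _ _, ?_⟩
  have : A \ A.erase u = {u} := by
    ext x
    simp only [Finset.mem_sdiff, Finset.mem_erase, Finset.mem_singleton, not_and]
    constructor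
    · rintro ⟨hxA, hx⟩
      by_contra hne
      exact (hx hne) hxA
    · rintro rfl
      exact ⟨hu, fun h _ => absurd rfl h⟩
  rw [this, Finset.card_singleton]

lemma ta_intro {A : Finset V} {w : V} (hw : w ∉ A) : TAStep A (insert w A) := by
  refine ⟨Finset.subset_insert _ _, ?_⟩
  have : insert w A \ A = {w} := by
    ext x
    simp only [Finset.mem_sdiff, Finset.mem_insert, Finset.mem_singleton]
    constructor
    · rintro ⟨hx | hx, hxA⟩
      · exact hx
      · exact absurd hx hxA
    · rintro rfl
      exact ⟨Or.inl rfl, hw⟩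
  rw [this, Finset.card_singleton]

lemma tj_decomp {A B : Finset V} (h : TJStep A B) :
    ∃ u w, u ∈ A ∧ w ∉ A ∧ u ≠ w ∧ B = insert w (A.erase u) := by
  obtain ⟨hcard, hAB⟩ := h
  obtain ⟨u, hu⟩ := Finset.card_eq_one.mp hAB
  have hBA : (B \ A).card = 1 := by rw [← Finset.card_sdiff_comm hcard, hAB]
  obtain ⟨w, hw⟩ := Finset.card_eq_one.mp hBA
  have humem : u ∈ A \ B := hu ▸ Finset.mem_singleton_self u
  have hwmem : w ∈ B \ A := hw ▸ Finset.mem_singleton_self w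
  rw [Finset.mem_sdiff] at humem hwmem
  refine ⟨u, w, humem.1, hwmem.2, fun he => hwmem.2 (he ▸ humem.1), ?_⟩
  ext x
  simp only [Finset.mem_insert, Finset.mem_erase]
  constructor
  · intro hxB
    by_cases hxA : x ∈ A
    · refine Or.inr ⟨fun hxu => ?_, hxA⟩
      exact humem.2 (hxu ▸ hxB)
    · have : x ∈ B \ A := Finset.mem_sdiff.mpr ⟨hxB, hxA⟩
      rw [hw, Finset.mem_singleton] at this
      exact Or.inl this
  · rintro (rfl | ⟨hne, hxA⟩)
    · exact hwmem.1
    · by_contra hxB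
      have : x ∈ A \ B := Finset.mem_sdiff.mpr ⟨hxA, hxB⟩
      rw [hu, Finset.mem_singleton] at this
      exact hne this

lemma tj_insert_erase {A : Finset V} {u w : V} (hu : u ∈ A) (hw : w ∉ A) :
    TJStep A (insert w (A.erase u)) := by
  have hwe : w ∉ A.erase u := fun hc => hw (Finset.erase_subset _ _ hc)
  constructor
  · rw [Finset.card_insert_of_notMem hwe, Finset.card_erase_add_one hu]
  · have : A \ insert w (A.erase u) = {u} := by
      ext x
      simp only [Finset.mem_sdiff, Finset.mem_insert, Finset.mem_erase, Finset.mem_singleton,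
        not_or, not_and]
      constructor
      · rintro ⟨hxA, hxw, hx⟩
        by_contra hne
        exact (hx hne) hxA
      · rintro rfl
        exact ⟨hu, fun he => hw (he ▸ hu), fun h _ => absurd rfl h⟩
    rw [this, Finset.card_singleton]

variable [Fintype V] {G : SimpleGraph V} [DecidableRel G.Adj]

lemma mem_bdry {A : Finset V} {v : V} :
    v ∈ Bdry G A ↔ v ∉ A ∧ ∃ u ∈ A, G.Adj v u := by
  simp [Bdry]

lemma nbrs_mono {A B : Finset V} (h : A ⊆ B) (v : V) : NbrsIn G A v ≤ NbrsIn G B v :=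
  Finset.card_le_card (Finset.filter_subset_filter _ h)

lemma nbrs_compl_mono {A B : Finset V} (h : A ⊆ B) (v : V) :
    NbrsIn G Bᶜ v ≤ NbrsIn G Aᶜ v :=
  nbrs_mono (Finset.compl_subset_compl.mpr h) v

/-- Boundary vertex of a subset gives the offensive bound for a superset. -/
lemma off_bound {A C : Finset V} (hA : OffAll G A) (hsub : A ⊆ C) {x : V}
    (hx : x ∈ Bdry G A) : NbrsIn G C x ≥ NbrsIn G Cᶜ x + 1 := by
  have h1 := hA x hx
  have h2 := nbrs_mono (G := G) hsub x
  have h3 := nbrs_compl_mono (G := G) hsub x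
  omega

lemma union_off {A B : Finset V} {u w : V} (hA : OffAll G A) (hB : OffAll G B)
    (hu : u ∈ A) (hw : w ∉ A) (hBdef : B = insert w (A.erase u)) :
    OffAll G (insert w A) := by
  intro x hx
  rw [mem_bdry] at hx
  obtain ⟨hxn, y, hy, hadj⟩ := hx
  have hBsub : B ⊆ insert w A := by
    rw [hBdef]
    exact Finset.insert_subset_insert _ (Finset.erase_subset _ _)
  rcases Finset.mem_insert.mp hy with rfl | hyA
  · -- y = w, use B
    have hxB : x ∈ Bdry G B :=
      mem_bdry.mpr ⟨fun hc => hxn (hBsub hc), y, hBdef ▸ Finset.mem_insert_self _ _, hadj⟩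
    exact off_bound hB hBsub hxB
  · -- y ∈ A, use A
    have hxA : x ∈ Bdry G A :=
      mem_bdry.mpr ⟨fun hc => hxn (Finset.mem_insert_of_mem hc), y, hyA, hadj⟩
    exact off_bound hA (Finset.subset_insert _ _) hxA

lemma union_ind {A B : Finset V} {u w : V} (hIA : IndSet G A) (hIB : IndSet G B)
    (hu : u ∈ A) (hw : w ∉ A) (hBdef : B = insert w (A.erase u)) (hnadj : ¬ G.Adj u w) :
    IndSet G (insert w A) := by
  have hwB : w ∈ B := hBdef ▸ Finset.mem_insert_self _ _
  have hmemB : ∀ b ∈ A, b ≠ u → b ∈ B := fun b hb hne =>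
    hBdef ▸ Finset.mem_insert_of_mem (Finset.mem_erase.mpr ⟨hne, hb⟩)
  intro a ha b hb
  rcases Finset.mem_insert.mp ha with rfl | haA <;> rcases Finset.mem_insert.mp hb with rfl | hbA
  · exact G.irrefl
  · by_cases hbu : b = u
    · subst hbu
      exact fun h => hnadj h.symm
    · exact hIB a hwB b (hmemB b hbA hbu)
  · by_cases hau : a = u
    · subst hau
      exact hnadj
    · exact hIB a (hmemB a haA hau) b hwB
  · exact hIA a haA b hbA

lemma leaf_pair {A B : Finset V} {u w : V} (hA : OffAll G A) (hIA : IndSet G A)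
    (hB : OffAll G B) (hIB : IndSet G B) (hu : u ∈ A) (hw : w ∉ A)
    (hBdef : B = insert w (A.erase u)) (hadj : G.Adj u w) :
    (∀ x, G.Adj u x → x = w) ∧ (∀ x, G.Adj w x → x = u) := by
  have huw : u ≠ w := fun he => hw (he ▸ hu)
  have hwB : w ∈ B := hBdef ▸ Finset.mem_insert_self _ _
  have huB : u ∉ B := by
    rw [hBdef]
    simp only [Finset.mem_insert, Finset.mem_erase]
    rintro (h | ⟨h, _⟩)
    · exact huw h
    · exact h rfl
  have hmemB : ∀ b ∈ A, b ≠ u → b ∈ B := fun b hb hne =>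
    hBdef ▸ Finset.mem_insert_of_mem (Finset.mem_erase.mpr ⟨hne, hb⟩)
  have hmemA : ∀ b ∈ B, b ≠ w → b ∈ A := by
    intro b hb hne
    rw [hBdef, Finset.mem_insert] at hb
    rcases hb with h | h
    · exact absurd h hne
    · exact Finset.erase_subset _ _ h
  -- w's neighbors
  have hwBd : w ∈ Bdry G A := mem_bdry.mpr ⟨hw, u, hu, hadj.symm⟩
  have h1 := hA w hwBd
  have hsubw : A.filter (fun z => G.Adj w z) ⊆ {u} := by
    intro x hx
    rw [Finset.mem_filter] at hx
    rw [Finset.mem_singleton]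
    by_contra hne
    exact hIB w hwB x (hmemB x hx.1 hne) hx.2
  have h2 : NbrsIn G A w ≤ 1 := le_trans (Finset.card_le_card hsubw) (by simp)
  have h3 : NbrsIn G Aᶜ w = 0 := by omega
  have hwonly : ∀ x, G.Adj w x → x = u := by
    intro x hx
    by_cases hxA : x ∈ A
    · have : x ∈ A.filter (fun z => G.Adj w z) := Finset.mem_filter.mpr ⟨hxA, hx⟩
      exact Finset.mem_singleton.mp (hsubw this)
    · exfalso
      have hmem : x ∈ Aᶜ.filter (fun z => G.Adj w z) :=
        Finset.mem_filter.mpr ⟨Finset.mem_compl.mpr hxA, hx⟩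
      have hge : 1 ≤ NbrsIn G Aᶜ w := Finset.card_pos.mpr ⟨x, hmem⟩
      omega
  -- u's neighbors
  have huBd : u ∈ Bdry G B := mem_bdry.mpr ⟨huB, w, hwB, hadj⟩
  have h1' := hB u huBd
  have hsubu : B.filter (fun z => G.Adj u z) ⊆ {w} := by
    intro x hx
    rw [Finset.mem_filter] at hx
    rw [Finset.mem_singleton]
    by_contra hne
    exact hIA u hu x (hmemA x hx.1 hne) hx.2
  have h2' : NbrsIn G B u ≤ 1 := le_trans (Finset.card_le_card hsubu) (by simp)
  have h3' : NbrsIn G Bᶜ u = 0 := by omega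
  have huonly : ∀ x, G.Adj u x → x = w := by
    intro x hx
    by_cases hxB : x ∈ B
    · have : x ∈ B.filter (fun z => G.Adj u z) := Finset.mem_filter.mpr ⟨hxB, hx⟩
      exact Finset.mem_singleton.mp (hsubu this)
    · exfalso
      have hmem : x ∈ Bᶜ.filter (fun z => G.Adj u z) :=
        Finset.mem_filter.mpr ⟨Finset.mem_compl.mpr hxB, hx⟩
      have hge : 1 ≤ NbrsIn G Bᶜ u := Finset.card_pos.mpr ⟨x, hmem⟩
      omega
  exact ⟨huonly, hwonly⟩

lemma leaf_remove {A : Finset V} {u w : V} (hA : OffAll G A) (hIA : IndSet G A)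
    (hu : u ∈ A) (honlyu : ∀ x, G.Adj u x → x = w) (honlyw : ∀ x, G.Adj w x → x = u)
    (hwA : w ∉ A) :
    OffAll G (A.erase u) ∧ IndSet G (A.erase u) := by
  constructor
  · intro x hx
    rw [mem_bdry] at hx
    obtain ⟨hxn, y, hy, hxy⟩ := hx
    have hyA : y ∈ A := Finset.erase_subset _ _ hy
    have hxu : x ≠ u := by
      rintro rfl
      have := honlyu y hxy
      exact hwA (this ▸ hyA)
    have hxw : x ≠ w := by
      rintro rfl
      have := honlyw y hxy
      exact (Finset.mem_erase.mp hy).1 this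
    have hxA : x ∉ A := fun hc => hxn (Finset.mem_erase.mpr ⟨hxu, hc⟩)
    have hnadjxu : ¬ G.Adj x u := fun hc => hxw (honlyu x hc.symm)
    have hxBd : x ∈ Bdry G A := mem_bdry.mpr ⟨hxA, y, hyA, hxy⟩
    have h1 := hA x hxBd
    have e1 : NbrsIn G (A.erase u) x = NbrsIn G A x := by
      unfold NbrsIn
      congr 1
      ext z
      simp only [Finset.mem_filter, Finset.mem_erase]
      constructor
      · rintro ⟨⟨_, hz⟩, ha⟩; exact ⟨hz, ha⟩
      · rintro ⟨hz, ha⟩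
        refine ⟨⟨fun he => hnadjxu (he ▸ ha), hz⟩, ha⟩
    have e2 : NbrsIn G (A.erase u)ᶜ x = NbrsIn G Aᶜ x := by
      unfold NbrsIn
      congr 1
      ext z
      simp only [Finset.mem_filter, Finset.mem_compl, Finset.mem_erase, not_and]
      constructor
      · rintro ⟨hz, ha⟩
        refine ⟨fun hzA => ?_, ha⟩
        have := hz (fun he => hnadjxu (he ▸ ha))
        exact this hzA
      · rintro ⟨hz, ha⟩
        exact ⟨fun _ => hz, ha⟩
    rw [e1, e2]
    exact h1
  · intro a ha b hb
    exact hIA a (Finset.erase_subset _ _ ha) b (Finset.erase_subset _ _ hb)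

end Aux


section Aux2

variable {V : Type*} [DecidableEq V]

lemma isSeq_iff_rtg (step : Finset V → Finset V → Prop) (X : Finset V → Prop)
    (A B : Finset V) :
    (∃ n, IsSeq step X A B n) ↔
      X A ∧ Relation.ReflTransGen (fun S T => step S T ∧ X S ∧ X T) A B := by
  constructor
  · rintro ⟨n, f, hn, h0, hl, hstep, hX⟩
    have key : ∀ i, i < n → Relation.ReflTransGen (fun S T => step S T ∧ X S ∧ X T) A (f i) := by
      intro i
      induction i with
      | zero => intro _; rw [h0]
      | succ i ih =>
        intro hi
        exact (ih (by omega)).tail ⟨hstep i hi, hX i (by omega), hX (i + 1) hi⟩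
    refine ⟨h0 ▸ hX 0 (by omega), ?_⟩
    have := key (n - 1) (by omega)
    rwa [hl] at this
  · rintro ⟨hXA, h⟩
    obtain ⟨l, hchain, hlast⟩ := List.exists_isChain_cons_of_relationReflTransGen h
    refine ⟨l.length + 1, fun i => (A :: l).getD i A, by omega, by simp, ?_, ?_, ?_⟩
    · have h1 : l.length + 1 - 1 < (A :: l).length := by simp
      show (A :: l).getD (l.length + 1 - 1) A = B
      rw [List.getD_eq_getElem _ _ h1]
      rw [List.getLast_eq_getElem] at hlast
      convert hlast using 2 <;> simp
    · intro i hi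
      have hc : List.Chain' (fun S T => step S T ∧ X S ∧ X T) (A :: l) := hchain
      have h1 : i < (A :: l).length := by simp; omega
      have h2 : i + 1 < (A :: l).length := by simp; omega
      show step ((A :: l).getD i A) ((A :: l).getD (i + 1) A)
      rw [List.getD_eq_getElem _ _ h1, List.getD_eq_getElem _ _ h2]
      exact (List.isChain_iff_getElem.mp hc i (by simp; omega)).1
    · intro i hi
      match i with
      | 0 => simpa using hXA
      | (j + 1) =>
        have hc : List.Chain' (fun S T => step S T ∧ X S ∧ X T) (A :: l) := hchain
        have h2 : j + 1 < (A :: l).length := by simp; omega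
        show X ((A :: l).getD (j + 1) A)
        rw [List.getD_eq_getElem _ _ h2]
        exact (List.isChain_iff_getElem.mp hc j (by simp; omega)).2.2

variable [Fintype V] {G : SimpleGraph V} [DecidableRel G.Adj] {k : ℕ}

/-- A single TJ step between ind. off. alliances of size `k` can be replaced by two
TAR steps with threshold `k+1`. -/
lemma tj_to_tar_step {C D : Finset V} (hC : OffAll G C ∧ IndSet G C)
    (hD : OffAll G D ∧ IndSet G D) (hCk : C.card = k) (h : TJStep C D) :
    D.card = k ∧ Relation.ReflTransGen
      (fun S T => TARStep S T ∧ ((OffAll G S ∧ IndSet G S) ∧ S.card ≤ k + 1) ∧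
        ((OffAll G T ∧ IndSet G T) ∧ T.card ≤ k + 1)) C D := by
  obtain ⟨u, w, hu, hw, huw, hDdef⟩ := tj_decomp h
  have hDk : D.card = k := by rw [← h.1, hCk]
  refine ⟨hDk, ?_⟩
  have hXC : (OffAll G C ∧ IndSet G C) ∧ C.card ≤ k + 1 := ⟨hC, by omega⟩
  have hXD : (OffAll G D ∧ IndSet G D) ∧ D.card ≤ k + 1 := ⟨hD, by omega⟩
  by_cases hadj : G.Adj u w
  · -- leaf case: go through C.erase u
    obtain ⟨honlyu, honlyw⟩ := leaf_pair hC.1 hC.2 hD.1 hD.2 hu hw hDdef hadj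
    have hM : OffAll G (C.erase u) ∧ IndSet G (C.erase u) :=
      leaf_remove hC.1 hC.2 hu honlyu honlyw hw
    have hMcard : (C.erase u).card ≤ k + 1 := by
      have := Finset.card_erase_add_one hu
      omega
    have step1 : TARStep C (C.erase u) := Or.inr (tr_intro hu)
    have step2 : TARStep (C.erase u) D := by
      refine Or.inl ⟨?_, ?_⟩
      · rw [hDdef]; exact Finset.subset_insert _ _
      · have : D \ C.erase u = {w} := by
          rw [hDdef]
          ext x
          simp only [Finset.mem_sdiff, Finset.mem_insert, Finset.mem_erase, Finset.mem_singleton]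
          constructor
          · rintro ⟨rfl | ⟨hne, hxA⟩, hx⟩
            · rfl
            · exact absurd ⟨hne, hxA⟩ hx
          · rintro rfl
            exact ⟨Or.inl rfl, fun hc => hw hc.2⟩
        rw [this, Finset.card_singleton]
    exact (Relation.ReflTransGen.single ⟨step1, hXC, hM, hMcard⟩).tail
      ⟨step2, ⟨hM, hMcard⟩, hXD⟩
  · -- generic case: go through insert w C
    have hM : OffAll G (insert w C) ∧ IndSet G (insert w C) :=
      ⟨union_off hC.1 hD.1 hu hw hDdef, union_ind hC.2 hD.2 hu hw hDdef hadj⟩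
    have hMcard : (insert w C).card ≤ k + 1 := by
      have := Finset.card_insert_le w C
      omega
    have step1 : TARStep C (insert w C) := Or.inl (ta_intro hw)
    have step2 : TARStep (insert w C) D := by
      refine Or.inr ⟨?_, ?_⟩
      · rw [hDdef]
        exact Finset.insert_subset_insert _ (Finset.erase_subset _ _)
      · have : insert w C \ D = {u} := by
          rw [hDdef]
          ext x
          simp only [Finset.mem_sdiff, Finset.mem_insert, Finset.mem_erase, Finset.mem_singleton,
            not_or, not_and]
          constructor
          · rintro ⟨rfl | hxC, hxw, hx⟩
            · exact absurd rfl hxw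
            · by_contra hne
              exact hx hne hxC
          · rintro rfl
            exact ⟨Or.inr hu, fun he => hw (he ▸ hu), fun h' _ => absurd rfl h'⟩
        rw [this, Finset.card_singleton]
    exact (Relation.ReflTransGen.single ⟨step1, hXC, hM, hMcard⟩).tail
      ⟨step2, ⟨hM, hMcard⟩, hXD⟩

/-- Forward direction: a TJ sequence gives a TAR sequence with threshold `k+1`. -/
lemma fwd_rtg {A B : Finset V} (hA : OffAll G A ∧ IndSet G A) (hAk : A.card = k)
    (h : Relation.ReflTransGen
      (fun S T => TJStep S T ∧ (OffAll G S ∧ IndSet G S) ∧ (OffAll G T ∧ IndSet G T)) A B) :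
    Relation.ReflTransGen
      (fun S T => TARStep S T ∧ ((OffAll G S ∧ IndSet G S) ∧ S.card ≤ k + 1) ∧
        ((OffAll G T ∧ IndSet G T) ∧ T.card ≤ k + 1)) A B := by
  have : ∀ C, Relation.ReflTransGen
      (fun S T => TJStep S T ∧ (OffAll G S ∧ IndSet G S) ∧ (OffAll G T ∧ IndSet G T)) A C →
      C.card = k ∧ Relation.ReflTransGen
      (fun S T => TARStep S T ∧ ((OffAll G S ∧ IndSet G S) ∧ S.card ≤ k + 1) ∧
        ((OffAll G T ∧ IndSet G T) ∧ T.card ≤ k + 1)) A C := by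
    intro C hC
    induction hC with
    | refl => exact ⟨hAk, Relation.ReflTransGen.refl⟩
    | tail hstep hlast ih =>
      rename_i C' D' _
      obtain ⟨hck, hrtg⟩ := ih
      obtain ⟨hDk, hseg⟩ := tj_to_tar_step hlast.2.1 hlast.2.2 hck hlast.1
      exact ⟨hDk, hrtg.trans hseg⟩
  exact (this B h).2

end Aux2


section Aux3

variable {V : Type*} [DecidableEq V] [Fintype V] (G : SimpleGraph V) [DecidableRel G.Adj] (k : ℕ)

/-- TAR step with both endpoints independent offensive alliances of size at most `k+1`. -/
def RTx (S T : Finset V) : Prop :=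
  TARStep S T ∧ ((OffAll G S ∧ IndSet G S) ∧ S.card ≤ k + 1) ∧
    ((OffAll G T ∧ IndSet G T) ∧ T.card ≤ k + 1)

/-- TJ step with both endpoints independent offensive alliances. -/
def RJx (S T : Finset V) : Prop :=
  TJStep S T ∧ (OffAll G S ∧ IndSet G S) ∧ (OffAll G T ∧ IndSet G T)

/-- Reversed removal step (for descending prefixes). -/
def RRx (S T : Finset V) : Prop := RTx G k T S ∧ TRStep T S

/-- The main induction property: any `RTx`-chain of at most `N` members starting at a
size-`k` alliance and ending at `B` can be converted to a TJ reconfiguration. -/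
def MProp (B : Finset V) (N : ℕ) : Prop :=
  ∀ (A : Finset V) (l : List (Finset V)), (A :: l).length ≤ N →
    (OffAll G A ∧ IndSet G A) → A.card = k → List.Chain (RTx G k) A l →
    (A :: l).getLast (List.cons_ne_nil _ _) = B →
    Relation.ReflTransGen (RJx G) A B

variable {G k}

lemma flat_chain : ∀ (Q : List (Finset V)) (E : Finset V) (l : List (Finset V)),
    List.Chain' (RRx G k) (E :: Q) → List.Chain (RTx G k) E l →
    ∃ t, (E :: Q).reverse ++ l = (E :: Q).getLast (List.cons_ne_nil _ _) :: t ∧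
      List.Chain (RTx G k) ((E :: Q).getLast (List.cons_ne_nil _ _)) t ∧
      ((E :: Q).getLast (List.cons_ne_nil _ _) :: t).getLast (List.cons_ne_nil _ _) =
        (E :: l).getLast (List.cons_ne_nil _ _) := by
  intro Q
  induction Q with
  | nil =>
    intro E l _ hc
    exact ⟨l, by simp, by simpa using hc, by simp⟩
  | cons F Q' ih =>
    intro E l hch hc
    rw [List.Chain', List.isChain_cons_cons] at hch
    obtain ⟨hEF, hch'⟩ := hch
    have hcont : List.Chain (RTx G k) F (E :: l) := List.Chain.cons hEF.1 hc
    obtain ⟨t, h1, h2, h3⟩ := ih F (E :: l) hch' hcont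
    refine ⟨t, ?_, ?_, ?_⟩
    · rw [List.getLast_cons_cons]
      rw [← h1]
      simp
    · rw [List.getLast_cons_cons]
      exact h2
    · rw [List.getLast_cons_cons, h3, List.getLast_cons_cons]

lemma bubble (B : Finset V) (hBk : B.card = k) (N : ℕ)
    (ihM : ∀ M, M < N → MProp G k B M) :
    ∀ (Q' : List (Finset V)) (D E : Finset V) (w : V) (l : List (Finset V)) (A0 : Finset V),
    List.Chain' (RRx G k) (D :: E :: Q') →
    (E :: Q').getLast (List.cons_ne_nil _ _) = A0 →
    (OffAll G A0 ∧ IndSet G A0) → A0.card = k →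
    w ∉ D → RTx G k D (insert w D) →
    List.Chain (RTx G k) (insert w D) l →
    (insert w D :: l).getLast (List.cons_ne_nil _ _) = B →
    D.card + (D :: E :: Q').length = k + 1 →
    (D :: E :: Q').length + 1 + l.length ≤ N →
    Relation.ReflTransGen (RJx G) A0 B := by
  intro Q'
  induction Q' with
  | nil =>
    intro D E w l A0 hch hglA hXA hAk hw hstep hcont hlast hsz htot
    have hEA : E = A0 := by simpa using hglA
    subst hEA
    rw [List.Chain', List.isChain_cons_cons] at hch
    obtain ⟨hDE, -⟩ := hch
    obtain ⟨u, huE, hDdef⟩ := tr_decomp hDE.2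
    have hDcard : D.card + 1 = E.card := hDdef ▸ Finset.card_erase_add_one huE
    simp only [List.length_cons, List.length_nil] at hsz htot
    by_cases hwu : w = u
    · -- cancellation : insert w D = E
      have hEins : insert w D = E := by rw [hDdef, hwu, Finset.insert_erase huE]
      refine ihM (N - 1) (by omega) E l (by simp; omega) hXA hAk (hEins ▸ hcont) ?_
      rw [← hEins]
      exact (by cases l with
        | nil => simpa using hlast
        | cons x t => simpa [List.getLast_cons_cons] using hlast)
    · -- TJ compression step
      have hwE : w ∉ E := by
        intro hc
        exact hw (hDdef ▸ Finset.mem_erase.mpr ⟨hwu, hc⟩)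
      have hjs : TJStep E (insert w D) := hDdef ▸ tj_insert_erase huE hwE
      have hXins := hstep.2.2
      refine Relation.ReflTransGen.head ⟨hjs, hXA, hXins.1⟩ ?_
      refine ihM (N - 1) (by omega) (insert w D) l (by simp; omega) hXins.1 ?_ hcont hlast
      rw [Finset.card_insert_of_notMem hw]
      omega
  | cons F Q'' ihQ =>
    intro D E w l A0 hch hglA hXA hAk hw hstep hcont hlast hsz htot
    rw [List.Chain', List.isChain_cons_cons] at hch
    obtain ⟨hDE, hch2⟩ := hch
    obtain ⟨u, huE, hDdef⟩ := tr_decomp hDE.2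
    have hXE := hDE.1.2.1
    have hXD := hDE.1.2.2
    have hXins := hstep.2.2
    have hDcard : D.card + 1 = E.card := hDdef ▸ Finset.card_erase_add_one huE
    have hglA' : (F :: Q'').getLast (List.cons_ne_nil _ _) = A0 := by
      rw [← hglA, List.getLast_cons_cons]
    simp only [List.length_cons] at hsz htot
    by_cases hwu : w = u
    · -- cancellation : insert w D = E; flatten and restart
      have hEins : insert w D = E := by rw [hDdef, hwu, Finset.insert_erase huE]
      have hcontE : List.Chain (RTx G k) E l := hEins ▸ hcont
      obtain ⟨t, ht1, ht2, ht3⟩ := flat_chain (F :: Q'') E l hch2 hcontE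
      have hlen := congrArg List.length ht1
      simp only [List.length_append, List.length_reverse, List.length_cons] at hlen
      rw [hglA] at ht1 ht2 ht3
      refine ihM (N - 1) (by omega) A0 t (by simp; omega) hXA hAk ht2 ?_
      rw [ht3, ← hEins]
      exact (by cases l with
        | nil => simpa using hlast
        | cons x t' => simpa [List.getLast_cons_cons] using hlast)
    · have hwE : w ∉ E := by
        intro hc
        exact hw (hDdef ▸ Finset.mem_erase.mpr ⟨hwu, hc⟩)
      rw [List.isChain_cons_cons] at hch2
      obtain ⟨hEF, hch3⟩ := hch2
      obtain ⟨u', hu'F, hEdef⟩ := tr_decomp hEF.2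
      have hXF := hEF.1.2.1
      have hEcard : E.card + 1 = F.card := hEdef ▸ Finset.card_erase_add_one hu'F
      have huE' : u ∈ F.erase u' := hEdef ▸ huE
      have huF : u ∈ F := Finset.erase_subset _ _ huE'
      have huu' : u ≠ u' := (Finset.mem_erase.mp huE').1
      by_cases hadj : G.Adj u w
      · -- leaf case
        obtain ⟨honlyu, honlyw⟩ :=
          leaf_pair hXE.1.1 hXE.1.2 hXins.1.1 hXins.1.2 huE hwE (hDdef ▸ rfl) hadj
        by_cases hwF : w ∈ F
        · -- second cancellation : insert w D = F.erase u
          have hwu' : w = u' := by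
            by_contra hne
            exact hwE (hEdef ▸ Finset.mem_erase.mpr ⟨hne, hwF⟩)
          have hkey : insert w D = F.erase u := by
            ext x
            simp only [Finset.mem_insert, Finset.mem_erase, hDdef, hEdef]
            constructor
            · rintro (rfl | ⟨hxu, hxu', hxF⟩)
              · exact ⟨fun he => hwu (he ▸ rfl), hwF⟩
              · exact ⟨hxu, hxF⟩
            · rintro ⟨hxu, hxF⟩
              by_cases hxu' : x = u'
              · exact Or.inl (hxu' ▸ hwu'.symm)
              · exact Or.inr ⟨hxu, hxu', hxF⟩
          have hstepF : RTx G k F (insert w D) :=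
            ⟨Or.inr (hkey ▸ tr_intro huF), hXF, hXins⟩
          have hcont2 : List.Chain (RTx G k) F (insert w D :: l) := List.Chain.cons hstepF hcont
          obtain ⟨t, ht1, ht2, ht3⟩ := flat_chain Q'' F (insert w D :: l) hch3 hcont2
          have hlen := congrArg List.length ht1
          simp only [List.length_append, List.length_reverse, List.length_cons] at hlen
          rw [hglA'] at ht1 ht2 ht3
          refine ihM (N - 1) (by omega) A0 t (by simp; omega) hXA hAk ht2 ?_
          rw [ht3, List.getLast_cons_cons]
          exact hlast
        · -- bad swap : move the removal of the leaf `u` earlier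
          have hE' := leaf_remove hXF.1.1 hXF.1.2 huF honlyu honlyw hwF
          have hE'card : (F.erase u).card + 1 = F.card := Finset.card_erase_add_one huF
          have hXE' : (OffAll G (F.erase u) ∧ IndSet G (F.erase u)) ∧ (F.erase u).card ≤ k + 1 :=
            ⟨hE', by omega⟩
          have hu'E' : u' ∈ F.erase u := Finset.mem_erase.mpr ⟨fun h => huu' h.symm, hu'F⟩
          have hwE' : w ∉ F.erase u := fun hc => hwF (Finset.erase_subset _ _ hc)
          have herase : (F.erase u).erase u' = D := by
            rw [hDdef, hEdef]
            ext x
            simp only [Finset.mem_erase]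
            tauto
          have hins_eq : insert w D = insert w ((F.erase u).erase u') := by rw [herase]
          have hnadju' : ¬ G.Adj u' w := by
            intro hc
            exact (fun h => huu' h.symm) (honlyw u' hc.symm)
          have hXinsE' : (OffAll G (insert w (F.erase u)) ∧ IndSet G (insert w (F.erase u))) ∧
              (insert w (F.erase u)).card ≤ k + 1 := by
            refine ⟨⟨union_off hE'.1 hXins.1.1 hu'E' hwE' hins_eq,
              union_ind hE'.2 hXins.1.2 hu'E' hwE' hins_eq hnadju'⟩, ?_⟩
            rw [Finset.card_insert_of_notMem hwE']
            omega
          have hstep' : RTx G k (F.erase u) (insert w (F.erase u)) :=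
            ⟨Or.inl (ta_intro hwE'), hXE', hXinsE'⟩
          have hstep2 : RTx G k (insert w (F.erase u)) (insert w D) := by
            refine ⟨Or.inr ?_, hXinsE', hXins⟩
            have he : (insert w (F.erase u)).erase u' = insert w D := by
              rw [Finset.erase_insert_of_ne (fun h => hwE' (by rw [h]; exact hu'E')), herase]
            exact he ▸ tr_intro (Finset.mem_insert_of_mem hu'E')
          have hch' : List.Chain' (RRx G k) (F.erase u :: F :: Q'') := by
            rw [List.Chain', List.isChain_cons_cons]
            exact ⟨⟨⟨Or.inr (tr_intro huF), hXF, hXE'⟩, tr_intro huF⟩, hch3⟩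
          refine ihQ (F.erase u) F w (insert w D :: l) A0 hch' hglA' hXA hAk hwE'
            hstep' (List.Chain.cons hstep2 hcont) ?_ ?_ ?_
          · rw [List.getLast_cons_cons]
            exact hlast
          · simp only [List.length_cons]
            omega
          · simp only [List.length_cons]
            omega
      · -- good swap : move the addition of `w` earlier
        have hXinsE : (OffAll G (insert w E) ∧ IndSet G (insert w E)) ∧
            (insert w E).card ≤ k + 1 := by
          refine ⟨⟨union_off hXE.1.1 hXins.1.1 huE hwE (hDdef ▸ rfl),
            union_ind hXE.1.2 hXins.1.2 huE hwE (hDdef ▸ rfl) hadj⟩, ?_⟩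
          rw [Finset.card_insert_of_notMem hwE]
          omega
        have hstep' : RTx G k E (insert w E) := ⟨Or.inl (ta_intro hwE), hXE, hXinsE⟩
        have hstep2 : RTx G k (insert w E) (insert w D) := by
          refine ⟨Or.inr ?_, hXinsE, hXins⟩
          have he : (insert w E).erase u = insert w D := by
            rw [Finset.erase_insert_of_ne hwu, hDdef]
          exact he ▸ tr_intro (Finset.mem_insert_of_mem huE)
        refine ihQ E F w (insert w D :: l) A0 (by rw [List.Chain', List.isChain_cons_cons]; exact ⟨hEF, hch3⟩)
          hglA' hXA hAk hwE hstep' (List.Chain.cons hstep2 hcont) ?_ ?_ ?_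
        · rw [List.getLast_cons_cons]
          exact hlast
        · simp only [List.length_cons]
          omega
        · simp only [List.length_cons]
          omega

lemma inner (B : Finset V) (hBk : B.card = k) (N : ℕ)
    (ihM : ∀ M, M < N → MProp G k B M) :
    ∀ (l : List (Finset V)) (D E : Finset V) (Q' : List (Finset V)) (A0 : Finset V),
    List.Chain' (RRx G k) (D :: E :: Q') →
    (E :: Q').getLast (List.cons_ne_nil _ _) = A0 →
    (OffAll G A0 ∧ IndSet G A0) → A0.card = k →
    List.Chain (RTx G k) D l →
    (D :: l).getLast (List.cons_ne_nil _ _) = B →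
    D.card + (D :: E :: Q').length = k + 1 →
    (D :: E :: Q').length + l.length ≤ N →
    Relation.ReflTransGen (RJx G) A0 B := by
  intro l
  induction l with
  | nil =>
    intro D E Q' A0 hch hglA hXA hAk hcont hlast hsz htot
    exfalso
    have hDB : D = B := by simpa using hlast
    simp only [List.length_cons] at hsz
    rw [hDB, hBk] at hsz
    omega
  | cons T l' ih =>
    intro D E Q' A0 hch hglA hXA hAk hcont hlast hsz htot
    rw [List.Chain, List.isChain_cons_cons] at hcont
    obtain ⟨hDT, hcont'⟩ := hcont
    have hlast' : (T :: l').getLast (List.cons_ne_nil _ _) = B := by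
      rw [← hlast, List.getLast_cons_cons]
    rcases hDT.1 with hta | htr
    · obtain ⟨w, hwD, rfl⟩ := ta_decomp hta
      exact bubble B hBk N ihM Q' D E w l' A0 hch hglA hXA hAk hwD hDT hcont' hlast' hsz
        (by simp only [List.length_cons] at htot ⊢; omega)
    · obtain ⟨u₀, hu₀, rfl⟩ := tr_decomp htr
      have hcard : (D.erase u₀).card + 1 = D.card := Finset.card_erase_add_one hu₀
      refine ih (D.erase u₀) D (E :: Q') A0 ?_ ?_ hXA hAk hcont' hlast' ?_ ?_
      · rw [List.Chain', List.isChain_cons_cons]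
        exact ⟨⟨hDT, tr_intro hu₀⟩, hch⟩
      · rw [← hglA, List.getLast_cons_cons]
      · simp only [List.length_cons] at hsz ⊢
        omega
      · simp only [List.length_cons] at htot ⊢
        omega

lemma main_all (B : Finset V) (hBk : B.card = k) : ∀ N, MProp G k B N := by
  intro N
  induction N using Nat.strong_induction_on with
  | _ N ihM =>
    intro A l hlen hXA hAk hchain hlast
    cases l with
    | nil =>
      have : A = B := by simpa using hlast
      rw [this]
    | cons S l' =>
      rw [List.Chain, List.isChain_cons_cons] at hchain
      obtain ⟨hAS, hchain'⟩ := hchain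
      have hlast1 : (S :: l').getLast (List.cons_ne_nil _ _) = B := by
        rw [← hlast, List.getLast_cons_cons]
      rcases hAS.1 with hta | htr
      · -- first step is an addition
        obtain ⟨v, hvA, rfl⟩ := ta_decomp hta
        have hScard : (insert v A).card = k + 1 := by
          rw [Finset.card_insert_of_notMem hvA, hAk]
        cases l' with
        | nil =>
          exfalso
          have : insert v A = B := by simpa using hlast1
          rw [this, hBk] at hScard
          omega
        | cons S₂ l'' =>
          rw [List.isChain_cons_cons] at hchain'
          obtain ⟨hSS₂, hchain''⟩ := hchain'
          have hlast2 : (S₂ :: l'').getLast (List.cons_ne_nil _ _) = B := by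
            rw [← hlast1, List.getLast_cons_cons]
          rcases hSS₂.1 with hta2 | htr2
          · exfalso
            obtain ⟨v₂, hv₂, rfl⟩ := ta_decomp hta2
            have := hSS₂.2.2.2
            rw [Finset.card_insert_of_notMem hv₂, hScard] at this
            omega
          · obtain ⟨u, huS, rfl⟩ := tr_decomp htr2
            have hS₂card : ((insert v A).erase u).card = k := by
              have := Finset.card_erase_add_one huS
              omega
            have hlenN : N ≥ 1 := by
              simp only [List.length_cons] at hlen
              omega
            by_cases huv : u = v
            · -- the two first steps cancel
              have hback : (insert v A).erase u = A := by
                rw [huv, Finset.erase_insert hvA]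
              refine ihM (N - 1) (by omega) A l'' ?_ hXA hAk (hback ▸ hchain'') (hback ▸ hlast2)
              simp only [List.length_cons] at hlen ⊢
              omega
            · -- compress into a TJ step
              have huA : u ∈ A := by
                rcases Finset.mem_insert.mp huS with h | h
                · exact absurd h huv
                · exact h
              have hS₂ : (insert v A).erase u = insert v (A.erase u) :=
                Finset.erase_insert_of_ne (fun h => huv h.symm)
              have hjs : TJStep A ((insert v A).erase u) :=
                hS₂ ▸ tj_insert_erase huA hvA
              refine Relation.ReflTransGen.head ⟨hjs, hXA, hSS₂.2.2.1⟩ ?_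
              refine ihM (N - 1) (by omega) ((insert v A).erase u) l'' ?_ hSS₂.2.2.1 hS₂card
                hchain'' hlast2
              simp only [List.length_cons] at hlen ⊢
              omega
      · -- first step is a removal : enter the descending phase
        obtain ⟨u, huA, rfl⟩ := tr_decomp htr
        have hcard : (A.erase u).card + 1 = A.card := Finset.card_erase_add_one huA
        refine inner B hBk N ihM l' (A.erase u) A [] A ?_ (by simp) hXA hAk hchain' hlast1 ?_ ?_
        · rw [List.Chain', List.isChain_cons_cons]
          exact ⟨⟨hAS, tr_intro huA⟩, List.isChain_singleton A⟩
        · simp only [List.length_cons, List.length_nil]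
          omega
        · simp only [List.length_cons, List.length_nil] at *
          omega

end Aux3


theorem stmt_8 {V : Type*} [Fintype V] [DecidableEq V]
    (G : SimpleGraph V) [DecidableRel G.Adj]
    (A_s A_t : Finset V) (k : ℕ)
    (hsoff : OffAll G A_s) (hsind : IndSet G A_s)
    (htoff : OffAll G A_t) (htind : IndSet G A_t)
    (hks : A_s.card = k) (hkt : A_t.card = k) :
    (∃ n, IsSeq TJStep (fun S => OffAll G S ∧ IndSet G S) A_s A_t n) ↔
      (∃ n, IsSeq TARStep
        (fun S => (OffAll G S ∧ IndSet G S) ∧ S.card ≤ k + 1) A_s A_t n) := by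
  constructor
  · intro h
    rw [isSeq_iff_rtg] at h
    rw [isSeq_iff_rtg]
    exact ⟨⟨⟨hsoff, hsind⟩, by omega⟩, fwd_rtg h.1 hks h.2⟩
  · intro h
    rw [isSeq_iff_rtg] at h
    obtain ⟨hXs, hrtg⟩ := h
    rw [isSeq_iff_rtg]
    refine ⟨⟨hsoff, hsind⟩, ?_⟩
    have hrtg' : Relation.ReflTransGen (RTx G k) A_s A_t := hrtg
    obtain ⟨l, hchain, hlast⟩ := List.exists_isChain_cons_of_relationReflTransGen hrtg'
    exact main_all A_t hkt ((A_s :: l).length) A_s l le_rfl ⟨hsoff, hsind⟩ hks hchain hlast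
end

section
/- Let G = (V, E) be a finite simple graph and let A ⊆ V be a global defensive alliance with |A| = k. Then |∂A| ≤ k² and |V| ≤ k + k². -/
open Finset

variable {V : Type*}

theorem stmt_16 {V : Type*} [Fintype V] [DecidableEq V]
    (G : SimpleGraph V) [DecidableRel G.Adj]
    (A : Finset V) (hAdef : DefAll G A) (hAdom : DomSet G A)
    (k : ℕ) (hk : A.card = k) :
    (Bdry G A).card ≤ k ^ 2 ∧ Fintype.card V ≤ k + k ^ 2 := by
  have hdeg : ∀ u ∈ A, NbrsIn G Aᶜ u ≤ k := by
    intro u hu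
    have h1 : NbrsIn G A u ≤ k - 1 := by
      have hsub : A.filter (fun x => G.Adj u x) ⊆ A.erase u := by
        intro x hx
        simp only [Finset.mem_filter] at hx
        exact Finset.mem_erase.2 ⟨fun h => G.irrefl (v := u) (h ▸ hx.2), hx.1⟩
      calc NbrsIn G A u ≤ (A.erase u).card := Finset.card_le_card hsub
        _ = k - 1 := by rw [Finset.card_erase_of_mem hu, hk]
    have hk1 : 1 ≤ k := hk ▸ Finset.card_pos.2 ⟨u, hu⟩
    have := hAdef u hu
    omega
  have hbd : Bdry G A ⊆ A.biUnion (fun u => Aᶜ.filter (fun v => G.Adj u v)) := by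
    intro v hv
    simp only [Bdry, Finset.mem_filter, Finset.mem_univ, true_and] at hv
    obtain ⟨hvA, u, hu, hadj⟩ := hv
    exact Finset.mem_biUnion.2 ⟨u, hu, Finset.mem_filter.2
      ⟨Finset.mem_compl.2 hvA, hadj.symm⟩⟩
  have h1 : (Bdry G A).card ≤ k ^ 2 := by
    calc (Bdry G A).card ≤ (A.biUnion (fun u => Aᶜ.filter (fun v => G.Adj u v))).card :=
          Finset.card_le_card hbd
      _ ≤ ∑ u ∈ A, (Aᶜ.filter (fun v => G.Adj u v)).card := Finset.card_biUnion_le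
      _ ≤ ∑ u ∈ A, k := Finset.sum_le_sum (fun u hu => hdeg u hu)
      _ = k ^ 2 := by rw [Finset.sum_const, hk, smul_eq_mul, sq]
  refine ⟨h1, ?_⟩
  have huniv : (Finset.univ : Finset V) ⊆ A ∪ Bdry G A := by
    intro v _
    rcases hAdom v with hv | ⟨u, hu, hadj⟩
    · exact Finset.mem_union_left _ hv
    · by_cases hvA : v ∈ A
      · exact Finset.mem_union_left _ hvA
      · exact Finset.mem_union_right _ (by
          simp only [Bdry, Finset.mem_filter, Finset.mem_univ, true_and]
          exact ⟨hvA, u, hu, hadj⟩)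
  calc Fintype.card V = (Finset.univ : Finset V).card := rfl
    _ ≤ (A ∪ Bdry G A).card := Finset.card_le_card huniv
    _ ≤ A.card + (Bdry G A).card := Finset.card_union_le _ _
    _ ≤ k + k ^ 2 := by rw [hk]; omega
end
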